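/- If H is a strongly primary monoid with Λ(H) < ∞, then H is locally tame but not globally tame. -/
import Mathlib


open Pointwise

section MonoidDefs

variable {G : Type*} [CommGroup G]

/-- `x` is a unit of the submonoid `H`. -/
def IsHUnit (H : Submonoid G) (x : G) : Prop := x ∈ H ∧ x⁻¹ ∈ H

/-- The set of non-units of `H`. -/
def nonUnits (H : Submonoid G) : Set G := {x | x ∈ H ∧ x⁻¹ ∉ H}

/-- `u` is an atom (irreducible element) of `H`. -/
def IsHAtom (H : Submonoid G) (u : G) : Prop :=
  u ∈ H ∧ ¬ IsHUnit H u ∧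
    ∀ a b : G, a ∈ H → b ∈ H → u = a * b → IsHUnit H a ∨ IsHUnit H b

/-- `G` is the quotient group of `H`. -/
def IsQuotientGroup (H : Submonoid G) : Prop :=
  ∀ g : G, ∃ a ∈ H, ∃ b ∈ H, g = a / b

/-- `H` is a primary monoid. -/
def IsPrimaryMonoid (H : Submonoid G) : Prop :=
  (nonUnits H).Nonempty ∧
    ∀ a ∈ nonUnits H, ∀ b ∈ nonUnits H, ∃ n : ℕ, 0 < n ∧ b ^ n ∈ a • (H : Set G)

/-- `H` is a strongly primary monoid. -/
def IsStronglyPrimary (H : Submonoid G) : Prop :=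
  (nonUnits H).Nonempty ∧
    ∀ a ∈ nonUnits H, ∃ n : ℕ, 0 < n ∧ nonUnits H ^ n ⊆ a • (H : Set G)

/-- `x` and `y` are associated in `H`. -/
def HAssoc (H : Submonoid G) (x y : G) : Prop := IsHUnit H (x / y)

/-- The set of lengths of `a`: all `k` such that `a` is a product of `k` atoms
(up to a unit of `H`). -/
def lengthSet (H : Submonoid G) (a : G) : Set ℕ :=
  {k | ∃ s : Multiset G, Multiset.card s = k ∧ (∀ v ∈ s, IsHAtom H v) ∧ HAssoc H a s.prod}

/-- `Λ(S)`, the supremum of the minimal factorization lengths of elements of `S`. -/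
noncomputable def Lambda (H : Submonoid G) (S : Set G) : ℕ∞ :=
  ⨆ (a : G) (_ : a ∈ S) (_ : (lengthSet H a).Nonempty), ((sInf (lengthSet H a) : ℕ) : ℕ∞)

/-- `ρ_k(H)`, the supremum of `sup L(a)` over all `a` with `k ∈ L(a)`. -/
noncomputable def rho (H : Submonoid G) (k : ℕ∞) : ℕ∞ :=
  ⨆ (a : G) (_ : a ∈ H) (_ : ∃ n ∈ lengthSet H a, (n : ℕ∞) = k),
    ⨆ (n : ℕ) (_ : n ∈ lengthSet H a), (n : ℕ∞)

/-- The elasticity `ρ(H) = sup { m/n : m, n ∈ L(a), a ∈ H }`. -/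
noncomputable def elasticity (H : Submonoid G) : ENNReal :=
  ⨆ (a : G) (_ : a ∈ H) (m : ℕ) (_ : m ∈ lengthSet H a) (n : ℕ) (_ : n ∈ lengthSet H a),
    (m : ENNReal) / (n : ENNReal)

/-- `z` is a factorization of `a`: a multiset of atoms whose product is associated to `a`. -/
def IsFactorization (H : Submonoid G) (a : G) (z : Multiset G) : Prop :=
  (∀ v ∈ z, IsHAtom H v) ∧ HAssoc H a z.prod

/-- The distance between two factorizations: cancel a (maximal) common part (up to
associates) and take the maximum of the lengths of the remaining parts. -/
noncomputable def fdist (H : Submonoid G) (z z' : Multiset G) : ℕ :=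
  sInf {N : ℕ | ∃ x x' v w : Multiset G, z = x + v ∧ z' = x' + w ∧
    Multiset.Rel (HAssoc H) x x' ∧ max (Multiset.card v) (Multiset.card w) ≤ N}

/-- `N` is a tame bound for the atom `u`: for every multiple `a` of `u` and every
factorization `z` of `a` there is a factorization `z'` of `a` containing `u`
with `d(z, z') ≤ N`. -/
def TameBound (H : Submonoid G) (u : G) (N : ℕ) : Prop :=
  ∀ a ∈ H, (∃ b ∈ H, a = u * b) → ∀ z : Multiset G, IsFactorization H a z →
    ∃ z' : Multiset G, IsFactorization H a z' ∧ (∃ v ∈ z', HAssoc H v u) ∧ fdist H z z' ≤ N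

/-- `H` is locally tame: `t(u) < ∞` for every atom `u`. -/
def LocallyTame (H : Submonoid G) : Prop :=
  ∀ u : G, IsHAtom H u → ∃ N : ℕ, TameBound H u N

/-- `H` is globally tame: `sup { t(u) : u an atom } < ∞`. -/
def GloballyTame (H : Submonoid G) : Prop :=
  ∃ N : ℕ, ∀ u : G, IsHAtom H u → TameBound H u N

/-- The local tame degree `t(u)` of `u`. -/
noncomputable def tameDeg (H : Submonoid G) (u : G) : ℕ∞ :=
  sInf {N : ℕ∞ | ∃ n : ℕ, TameBound H u n ∧ N = (n : ℕ∞)}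

/-- `N` is an omega bound for `a`: whenever `a` divides a product of elements of `H`,
it divides a subproduct with at most `N` factors. -/
def OmegaBound (H : Submonoid G) (a : G) (N : ℕ) : Prop :=
  ∀ s : Multiset G, (∀ x ∈ s, x ∈ H) → (∃ c ∈ H, s.prod = a * c) →
    ∃ t : Multiset G, t ≤ s ∧ Multiset.card t ≤ N ∧ ∃ c ∈ H, t.prod = a * c

/-- The omega invariant `ω(a)`. -/
noncomputable def omegaDeg (H : Submonoid G) (a : G) : ℕ∞ :=
  sInf {N : ℕ∞ | ∃ n : ℕ, OmegaBound H a n ∧ N = (n : ℕ∞)}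

/-- `M(x)`: the smallest `n ≥ 1` with `mⁿ ⊆ xH`. -/
noncomputable def Mdeg (H : Submonoid G) (x : G) : ℕ :=
  sInf {n : ℕ | 0 < n ∧ nonUnits H ^ n ⊆ x • (H : Set G)}

/-- The complete integral closure `Ĥ` of `H` (inside the quotient group). -/
def hatH (H : Submonoid G) : Set G := {x | ∃ c ∈ H, ∀ n : ℕ, c * x ^ n ∈ H}

/-- The set of non-units of `Ĥ`. -/
def hatNonUnits (H : Submonoid G) : Set G := {x | x ∈ hatH H ∧ x⁻¹ ∉ hatH H}

/-- The root closure `H̃` of `H`. -/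
def tildeH (H : Submonoid G) : Set G := {x | ∃ n : ℕ, 0 < n ∧ x ^ n ∈ H}

/-- The set of non-units of `H̃`. -/
def tildeNonUnits (H : Submonoid G) : Set G := {x | x ∈ tildeH H ∧ x⁻¹ ∉ tildeH H}

/-- The seminormal closure `H'` of `H`. -/
def seminormalClosure (H : Submonoid G) : Set G :=
  {x | ∃ N : ℕ, ∀ n : ℕ, N ≤ n → x ^ n ∈ H}

/-- The conductor `(H : Ĥ)`. -/
def conductorH (H : Submonoid G) : Set G := {z | ∀ x ∈ hatH H, z * x ∈ H}

/-- `Ĥ` is a primary monoid. -/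
def HatPrimary (H : Submonoid G) : Prop :=
  (hatNonUnits H).Nonempty ∧
    ∀ a ∈ hatNonUnits H, ∀ b ∈ hatNonUnits H,
      ∃ n : ℕ, 0 < n ∧ ∃ c ∈ hatH H, b ^ n = a * c

/-- `Ĥ` is a valuation monoid. -/
def HatValuation (H : Submonoid G) : Prop :=
  ∀ a ∈ hatH H, ∀ b ∈ hatH H,
    (∃ c ∈ hatH H, b = a * c) ∨ (∃ c ∈ hatH H, a = b * c)

/-- `H` is atomic. -/
def Atomic (H : Submonoid G) : Prop :=
  ∀ a ∈ nonUnits H, ∃ s : Multiset G, (∀ v ∈ s, IsHAtom H v) ∧ a = s.prod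

/-- `H` is a discrete valuation monoid, i.e. `H_red ≅ (ℕ₀, +)`. -/
def IsDiscreteValuationMonoid (H : Submonoid G) : Prop :=
  ∃ p ∈ H, ¬ IsHUnit H p ∧ ∀ a ∈ H, ∃ n : ℕ, ∃ ε : G, IsHUnit H ε ∧ a = ε * p ^ n

end MonoidDefs


section Aux

variable {G : Type*} [CommGroup G] {H : Submonoid G}

private lemma hu_one : IsHUnit H 1 := ⟨H.one_mem, by simpa using H.one_mem⟩

private lemma hu_mul {a b : G} (ha : IsHUnit H a) (hb : IsHUnit H b) : IsHUnit H (a * b) :=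
  ⟨H.mul_mem ha.1 hb.1, by rw [mul_inv]; exact H.mul_mem ha.2 hb.2⟩

private lemma hu_inv {a : G} (ha : IsHUnit H a) : IsHUnit H a⁻¹ :=
  ⟨ha.2, by simpa using ha.1⟩

private lemma hA_refl (a : G) : HAssoc H a a := by
  unfold HAssoc; rw [div_self']; exact hu_one

private lemma hA_symm {a b : G} (h : HAssoc H a b) : HAssoc H b a := by
  have := hu_inv h; unfold HAssoc at this ⊢; rwa [inv_div] at this

private lemma hA_trans {a b c : G} (h1 : HAssoc H a b) (h2 : HAssoc H b c) : HAssoc H a c := by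
  have hm := hu_mul h1 h2
  have he : a / c = (a / b) * (b / c) := (div_mul_div_cancel a b c).symm
  unfold HAssoc at hm ⊢
  rwa [← he] at hm

private lemma hA_mul {a b c d : G} (h1 : HAssoc H a b) (h2 : HAssoc H c d) :
    HAssoc H (a * c) (b * d) := by
  have := hu_mul h1 h2; unfold HAssoc at this ⊢; rwa [div_mul_div_comm] at this

private lemma atom_mem_nonUnits {u : G} (h : IsHAtom H u) : u ∈ nonUnits H :=
  ⟨h.1, fun hinv => h.2.1 ⟨h.1, hinv⟩⟩

private lemma not_hUnit_of_mem_nonUnits {a : G} (h : a ∈ nonUnits H) : ¬ IsHUnit H a :=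
  fun hu => h.2 hu.2

private lemma nonUnits_mul {a b : G} (ha : a ∈ nonUnits H) (hb : b ∈ nonUnits H) :
    a * b ∈ nonUnits H := by
  refine ⟨H.mul_mem ha.1 hb.1, fun h => ha.2 ?_⟩
  have h2 : b * (a * b)⁻¹ = a⁻¹ := by
    rw [mul_inv, mul_comm a⁻¹ b⁻¹]; exact mul_inv_cancel_left b a⁻¹
  rw [← h2]; exact H.mul_mem hb.1 h

private lemma prod_mem_nonUnits_pow :
    ∀ (s : Multiset G), (∀ x ∈ s, x ∈ nonUnits H) →
      s.prod ∈ (nonUnits H) ^ (Multiset.card s) := by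
  intro s
  induction s using Multiset.induction_on with
  | empty => intro _; simp [Set.mem_one]
  | cons a t ih =>
    intro hmem
    rw [Multiset.prod_cons, Multiset.card_cons, pow_succ, mul_comm a t.prod]
    exact Set.mul_mem_mul (ih fun x hx => hmem x (Multiset.mem_cons_of_mem hx))
      (hmem a (Multiset.mem_cons_self a t))

private lemma not_mem_pow_succ {a : G} {n : ℕ}
    (hsub : nonUnits H ^ n ⊆ a • (H : Set G)) : a ∉ nonUnits H ^ (n + 1) := by
  intro h
  rw [pow_succ] at h
  obtain ⟨x, hx, y, hy, hxy⟩ := h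
  obtain ⟨c, hc, hac⟩ := hsub hx
  have hac' : a * c = x := hac
  have hxy' : x * y = a := hxy
  have h1 : a * (c * y) = a * 1 := by
    rw [mul_one, ← mul_assoc, hac', hxy']
  have h2 : c * y = 1 := mul_left_cancel h1
  have : y⁻¹ = c := by
    have := congrArg (fun t => t * y⁻¹) h2
    simpa using this.symm
  exact hy.2 (this ▸ hc)

private lemma atomic_aux :
    ∀ n : ℕ, ∀ a ∈ nonUnits H, a ∉ nonUnits H ^ (n + 1) →
      ∃ s : Multiset G, (∀ v ∈ s, IsHAtom H v) ∧ a = s.prod := by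
  intro n
  induction n with
  | zero =>
    intro a ha hnot
    exact absurd (by simpa using ha) hnot
  | succ n ih =>
    intro a ha hnot
    by_cases hat : IsHAtom H a
    · exact ⟨{a}, by simpa using hat, by simp⟩
    · have hnu : ¬ IsHUnit H a := not_hUnit_of_mem_nonUnits ha
      have hex : ∃ b c : G, b ∈ H ∧ c ∈ H ∧ a = b * c ∧ ¬ IsHUnit H b ∧ ¬ IsHUnit H c := by
        by_contra hcon
        push_neg at hcon
        refine hat ⟨ha.1, hnu, fun b c hb hc habc => ?_⟩
        by_contra hboth
        push_neg at hboth
        exact hboth.2 (hcon b c hb hc habc hboth.1)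
      obtain ⟨b, c, hb, hc, habc, hbu, hcu⟩ := hex
      have hbm : b ∈ nonUnits H := ⟨hb, fun h => hbu ⟨hb, h⟩⟩
      have hcm : c ∈ nonUnits H := ⟨hc, fun h => hcu ⟨hc, h⟩⟩
      have hbn : b ∉ nonUnits H ^ (n + 1) := by
        intro hbp
        refine hnot ?_
        rw [pow_succ, habc]
        exact Set.mul_mem_mul hbp hcm
      have hcn : c ∉ nonUnits H ^ (n + 1) := by
        intro hcp
        refine hnot ?_
        rw [pow_succ, habc, mul_comm b c]
        exact Set.mul_mem_mul hcp hbm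
      obtain ⟨sb, hsb, hsbp⟩ := ih b hbm hbn
      obtain ⟨sc, hsc, hscp⟩ := ih c hcm hcn
      refine ⟨sb + sc, fun v hv => ?_, by rw [Multiset.prod_add, habc, hsbp, hscp]⟩
      rcases Multiset.mem_add.1 hv with h | h
      · exact hsb v h
      · exact hsc v h

private lemma atomic_of_sp (hsp : IsStronglyPrimary H) :
    ∀ a ∈ nonUnits H, ∃ s : Multiset G, (∀ v ∈ s, IsHAtom H v) ∧ a = s.prod := by
  intro a ha
  obtain ⟨n, _, hsub⟩ := hsp.2 a ha
  exact atomic_aux n a ha (not_mem_pow_succ hsub)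

private lemma lengthSet_nonempty (hsp : IsStronglyPrimary H) {a : G} (ha : a ∈ H) :
    (lengthSet H a).Nonempty := by
  by_cases hu : IsHUnit H a
  · exact ⟨0, 0, by simp, by simp, by simpa [HAssoc] using hu⟩
  · obtain ⟨s, hs, hsp'⟩ := atomic_of_sp hsp a ⟨ha, fun h => hu ⟨ha, h⟩⟩
    exact ⟨Multiset.card s, s, rfl, hs, by rw [hsp']; exact hA_refl _⟩

private lemma exists_short_fact (hsp : IsStronglyPrimary H)
    (hL : Lambda H (H : Set G) < ⊤) :
    ∃ lam : ℕ, ∀ a ∈ H, ∃ s : Multiset G, Multiset.card s ≤ lam ∧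
      (∀ v ∈ s, IsHAtom H v) ∧ HAssoc H a s.prod := by
  refine ⟨(Lambda H (H : Set G)).toNat, fun a ha => ?_⟩
  have hne := lengthSet_nonempty hsp ha
  have hmem := Nat.sInf_mem hne
  obtain ⟨s, hcard, hatoms, hassoc⟩ := hmem
  refine ⟨s, ?_, hatoms, hassoc⟩
  have hle : ((sInf (lengthSet H a) : ℕ) : ℕ∞) ≤ Lambda H (H : Set G) :=
    le_iSup_of_le a (le_iSup_of_le ha (le_iSup_of_le hne le_rfl))
  have := ENat.toNat_le_toNat hle hL.ne
  simpa [hcard] using this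

private lemma fdist_le {z z' x x' v w : Multiset G} (hz : z = x + v) (hz' : z' = x' + w)
    (hrel : Multiset.Rel (HAssoc H) x x') {N : ℕ}
    (hv : Multiset.card v ≤ N) (hw : Multiset.card w ≤ N) : fdist H z z' ≤ N :=
  Nat.sInf_le ⟨x, x', v, w, hz, hz', hrel, max_le hv hw⟩

private lemma fdist_spec {z z' : Multiset G} {N : ℕ} (h : fdist H z z' ≤ N) :
    ∃ x x' v w : Multiset G, z = x + v ∧ z' = x' + w ∧
      Multiset.Rel (HAssoc H) x x' ∧ Multiset.card v ≤ N ∧ Multiset.card w ≤ N := by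
  have hne : {N : ℕ | ∃ x x' v w : Multiset G, z = x + v ∧ z' = x' + w ∧
      Multiset.Rel (HAssoc H) x x' ∧ max (Multiset.card v) (Multiset.card w) ≤ N}.Nonempty :=
    ⟨max (Multiset.card z) (Multiset.card z'), 0, 0, z, z', (zero_add z).symm,
      (zero_add z').symm, Multiset.Rel.zero, le_rfl⟩
  obtain ⟨x, x', v, w, h1, h2, h3, h4⟩ := Nat.sInf_mem hne
  exact ⟨x, x', v, w, h1, h2, h3,
    le_trans (le_trans (le_max_left _ _) h4) h,
    le_trans (le_trans (le_max_right _ _) h4) h⟩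

private lemma rel_prod_assoc {x x' : Multiset G} (h : Multiset.Rel (HAssoc H) x x') :
    HAssoc H x.prod x'.prod := by
  induction h with
  | zero => exact hA_refl 1
  | cons hab _ ih => rw [Multiset.prod_cons, Multiset.prod_cons]; exact hA_mul hab ih

private lemma rel_mem_right {x x' : Multiset G} (h : Multiset.Rel (HAssoc H) x x')
    {w : G} (hw : w ∈ x') : ∃ y ∈ x, HAssoc H y w := by
  induction h with
  | zero => simp at hw
  | @cons a b as bs hab _ ih =>
    rcases Multiset.mem_cons.1 hw with h | h
    · exact ⟨a, Multiset.mem_cons_self a as, h ▸ hab⟩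
    · obtain ⟨y, hy, hyw⟩ := ih h
      exact ⟨y, Multiset.mem_cons_of_mem hy, hyw⟩

private lemma prod_dvd_pow {q : G} {N : ℕ} :
    ∀ t : Multiset G, (∀ v ∈ t, ∃ d ∈ H, q ^ N = v * d) →
      ∃ D ∈ H, q ^ (N * Multiset.card t) = t.prod * D := by
  intro t
  induction t using Multiset.induction_on with
  | empty => intro _; exact ⟨1, H.one_mem, by simp⟩
  | cons a t ih =>
    intro h
    obtain ⟨d, hd, hqd⟩ := h a (Multiset.mem_cons_self a t)
    obtain ⟨D, hD, hqD⟩ := ih fun v hv => h v (Multiset.mem_cons_of_mem hv)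
    refine ⟨d * D, H.mul_mem hd hD, ?_⟩
    rw [Multiset.card_cons, Multiset.prod_cons, Nat.mul_succ, pow_add, hqD, hqd]
    ac_rfl

private lemma prod_assoc_pow {q : G} :
    ∀ t : Multiset G, (∀ v ∈ t, HAssoc H v q) →
      ∃ η : G, IsHUnit H η ∧ t.prod = q ^ (Multiset.card t) * η := by
  intro t
  induction t using Multiset.induction_on with
  | empty => intro _; exact ⟨1, hu_one, by simp⟩
  | cons a t ih =>
    intro h
    obtain ⟨η, hη, htp⟩ := ih fun v hv => h v (Multiset.mem_cons_of_mem hv)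
    have ha : HAssoc H a q := h a (Multiset.mem_cons_self a t)
    refine ⟨η * (a / q), hu_mul hη ha, ?_⟩
    have haq : a = q * (a / q) := (mul_div_cancel q a).symm
    rw [Multiset.prod_cons, Multiset.card_cons, htp, pow_succ]
    nth_rewrite 1 [haq]
    ac_rfl

end Aux

/-- If `H` is a strongly primary monoid with `Λ(H) < ∞`, then `H` is
locally tame but not globally tame. -/
theorem stmt5 {G : Type*} [CommGroup G] (H : Submonoid G) (hq : IsQuotientGroup H)
    (hsp : IsStronglyPrimary H) (hL : Lambda H (H : Set G) < ⊤) :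
    LocallyTame H ∧ ¬ GloballyTame H := by
  classical
  obtain ⟨lam, hlam⟩ := exists_short_fact hsp hL
  constructor
  · -- Locally tame
    intro u hu
    have hum : u ∈ nonUnits H := atom_mem_nonUnits hu
    obtain ⟨M, hM0, hMsub⟩ := hsp.2 u hum
    refine ⟨max M (lam + 1), ?_⟩
    intro a ha hdiv z hz
    by_cases hcard : Multiset.card z ≤ M
    · -- short factorization: replace it wholesale
      obtain ⟨b, hb, hab⟩ := hdiv
      obtain ⟨s, hs_card, hs_atoms, hs_assoc⟩ := hlam b hb
      refine ⟨u ::ₘ s, ⟨?_, ?_⟩, ⟨u, Multiset.mem_cons_self u s, hA_refl u⟩, ?_⟩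
      · intro v hv
        rcases Multiset.mem_cons.1 hv with h | h
        · exact h ▸ hu
        · exact hs_atoms v h
      · -- HAssoc a (u * s.prod)
        have he : a / (u ::ₘ s).prod = b / s.prod := by
          rw [Multiset.prod_cons, hab, div_eq_div_iff_mul_eq_mul]
          ac_rfl
        unfold HAssoc
        rw [he]
        exact hs_assoc
      · refine fdist_le (H := H) (zero_add z).symm (zero_add _).symm Multiset.Rel.zero ?_ ?_
        · exact le_trans hcard (le_max_left _ _)
        · rw [Multiset.card_cons]
          exact le_trans (Nat.succ_le_succ hs_card) (le_max_right _ _)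
    · -- long factorization: extract u from the first M atoms
      push_neg at hcard
      set l := z.toList with hl
      set t : Multiset G := ((l.take M : List G) : Multiset G) with ht
      set r : Multiset G := ((l.drop M : List G) : Multiset G) with hr
      have hzlen : l.length = Multiset.card z := by
        rw [hl]; exact (Multiset.length_toList z).symm ▸ rfl
      have hzsplit : z = t + r := by
        rw [ht, hr, Multiset.coe_add, List.take_append_drop, hl, Multiset.coe_toList]
      have htmem : ∀ x ∈ t, x ∈ z := fun x hx => by
        rw [hzsplit]; exact Multiset.mem_add.2 (Or.inl hx)
      have hrmem : ∀ x ∈ r, x ∈ z := fun x hx => by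
        rw [hzsplit]; exact Multiset.mem_add.2 (Or.inr hx)
      have htcard : Multiset.card t = M := by
        rw [ht, Multiset.coe_card, List.length_take, hzlen]
        exact Nat.min_eq_left (le_of_lt hcard)
      have htpow : t.prod ∈ nonUnits H ^ M := by
        rw [← htcard]
        exact prod_mem_nonUnits_pow t fun x hx => atom_mem_nonUnits (hz.1 x (htmem x hx))
      obtain ⟨c, hc, huc⟩ := hMsub htpow
      have huc' : u * c = t.prod := huc
      obtain ⟨sc, hsc_card, hsc_atoms, hsc_assoc⟩ := hlam c hc
      refine ⟨(u ::ₘ sc) + r, ⟨?_, ?_⟩, ⟨u, by simp, hA_refl u⟩, ?_⟩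
      · intro v hv
        rcases Multiset.mem_add.1 hv with h | h
        · rcases Multiset.mem_cons.1 h with h' | h'
          · exact h' ▸ hu
          · exact hsc_atoms v h'
        · exact hz.1 v (hrmem v h)
      · -- HAssoc a of the new product
        have hzp : z.prod = (u * c) * r.prod := by rw [hzsplit, Multiset.prod_add, huc']
        have he : a / ((u ::ₘ sc) + r).prod = (a / z.prod) * (c / sc.prod) := by
          rw [Multiset.prod_add, Multiset.prod_cons, hzp, div_mul_div_comm,
            div_eq_div_iff_mul_eq_mul]
          ac_rfl
        unfold HAssoc
        rw [he]
        exact hu_mul hz.2 hsc_assoc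
      · refine fdist_le (H := H) (z := z) (x := r) (x' := r) (v := t) (w := u ::ₘ sc)
          (by rw [hzsplit, add_comm]) (add_comm _ _) ?_ ?_ ?_
        · exact Multiset.rel_refl_of_refl_on fun x _ => hA_refl x
        · rw [htcard]; exact le_max_left _ _
        · rw [Multiset.card_cons]
          exact le_trans (Nat.succ_le_succ hsc_card) (le_max_right _ _)
  · -- Not globally tame
    rintro ⟨N, hN⟩
    obtain ⟨b0, hb0⟩ := hsp.1
    obtain ⟨sb, hsb_atoms, hsb_prod⟩ := atomic_of_sp hsp b0 hb0
    have hsb_ne : sb ≠ 0 := by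
      intro h
      rw [h, Multiset.prod_zero] at hsb_prod
      exact hb0.2 (by rw [hsb_prod]; simpa using H.one_mem)
    obtain ⟨q, hq_mem⟩ := Multiset.exists_mem_of_ne_zero hsb_ne
    have hq_atom : IsHAtom H q := hsb_atoms q hq_mem
    have hqm : q ∈ nonUnits H := atom_mem_nonUnits hq_atom
    set n := (N + 1) * lam + 1 with hn
    have haH : q ^ n ∈ H := pow_mem hq_atom.1 n
    obtain ⟨s, hs_card, hs_atoms, hs_assoc⟩ := hlam (q ^ n) haH
    set ε := q ^ n / s.prod with hεdef
    have hεu : IsHUnit H ε := hs_assoc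
    have hεs : q ^ n = ε * s.prod := (div_mul_cancel (q ^ n) s.prod).symm
    -- every atom of `s` not associated to `q` divides `q ^ N`
    have key : ∀ v ∈ s, ¬ HAssoc H v q → ∃ d ∈ H, q ^ N = v * d := by
      intro v hv hnq
      have hv_atom := hs_atoms v hv
      have hdvd : ∃ c ∈ H, q ^ n = v * c := by
        refine ⟨ε * (s.erase v).prod, H.mul_mem hεu.1
          (H.multiset_prod_mem _ fun x hx =>
            (hs_atoms x (Multiset.mem_of_mem_erase hx)).1), ?_⟩
        conv_lhs => rw [hεs, ← Multiset.prod_erase hv]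
        ac_rfl
      have hfac : IsFactorization H (q ^ n) (Multiset.replicate n q) := by
        constructor
        · intro x hx
          rw [Multiset.eq_of_mem_replicate hx]
          exact hq_atom
        · rw [Multiset.prod_replicate]
          exact hA_refl _
      obtain ⟨z', hz'fac, ⟨w, hwz', hwv⟩, hdist⟩ :=
        hN v hv_atom (q ^ n) haH hdvd (Multiset.replicate n q) hfac
      obtain ⟨x, x', t1, t2, hzx, hz'x, hrel, ht1, ht2⟩ := fdist_spec hdist
      have hxle : x ≤ Multiset.replicate n q := hzx ▸ Multiset.le_add_right x t1
      obtain ⟨k, hkn, hxrep⟩ := Multiset.le_replicate_iff.1 hxle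
      have hkc : k + Multiset.card t1 = n := by
        have hc := congrArg Multiset.card hzx
        rw [Multiset.card_replicate, Multiset.card_add] at hc
        have hk : Multiset.card x = k := by rw [hxrep, Multiset.card_replicate]
        omega
      have hwt2 : w ∈ t2 := by
        rcases Multiset.mem_add.1 (hz'x ▸ hwz') with h | h
        · exfalso
          obtain ⟨y, hy, hyw⟩ := rel_mem_right hrel h
          have hyq : y = q := Multiset.eq_of_mem_replicate (hxrep ▸ hy)
          exact hnq (hA_trans (hA_symm hwv) (hA_symm (hyq ▸ hyw)))
        · exact h
      set ε' := q ^ n / z'.prod with hε'def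
      have hε'u : IsHUnit H ε' := hz'fac.2
      have hε's : ε' * z'.prod = q ^ n := div_mul_cancel (q ^ n) z'.prod
      have hxprod : x.prod = q ^ k := by rw [hxrep, Multiset.prod_replicate]
      have hx'assoc : HAssoc H (q ^ k) x'.prod := hxprod ▸ rel_prod_assoc hrel
      set η := x'.prod / q ^ k with hηdef
      have hηu : IsHUnit H η := hA_symm hx'assoc
      have hηs : η * q ^ k = x'.prod := div_mul_cancel x'.prod (q ^ k)
      set rest := (t2.erase w).prod with hrestdef
      have hrest : rest ∈ H := H.multiset_prod_mem _ fun y hy =>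
        (hz'fac.1 y (by
          rw [hz'x]
          exact Multiset.mem_add.2 (Or.inr (Multiset.mem_of_mem_erase hy)))).1
      have ht2p : t2.prod = w * rest := by rw [hrestdef, ← Multiset.prod_erase hwt2]
      have hbig : q ^ k * q ^ (Multiset.card t1) = q ^ k * (ε' * (η * (w * rest))) := by
        calc q ^ k * q ^ (Multiset.card t1) = q ^ n := by rw [← pow_add, hkc]
        _ = ε' * z'.prod := hε's.symm
        _ = ε' * (x'.prod * t2.prod) := by rw [hz'x, Multiset.prod_add]
        _ = ε' * ((η * q ^ k) * (w * rest)) := by rw [hηs, ht2p]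
        _ = q ^ k * (ε' * (η * (w * rest))) := by ac_rfl
      have hc1 : q ^ (Multiset.card t1) = ε' * (η * (w * rest)) := mul_left_cancel hbig
      have hwdec : v * (w / v) = w := mul_div_cancel v w
      refine ⟨q ^ (N - Multiset.card t1) * (ε' * (η * ((w / v) * rest))),
        H.mul_mem (pow_mem hq_atom.1 _) (H.mul_mem hε'u.1
          (H.mul_mem hηu.1 (H.mul_mem hwv.1 hrest))), ?_⟩
      calc q ^ N = q ^ (N - Multiset.card t1) * q ^ (Multiset.card t1) := by
            rw [← pow_add]; congr 1; omega
      _ = q ^ (N - Multiset.card t1) * (ε' * (η * ((v * (w / v)) * rest))) := by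
            rw [hc1, hwdec]
      _ = v * (q ^ (N - Multiset.card t1) * (ε' * (η * ((w / v) * rest)))) := by ac_rfl
    -- now combine
    set s1 := Multiset.filter (fun v => HAssoc H v q) s with hs1def
    set s2 := Multiset.filter (fun v => ¬ HAssoc H v q) s with hs2def
    have hsplit : s1 + s2 = s := Multiset.filter_add_not _ s
    obtain ⟨η, hηu, hs1p⟩ := prod_assoc_pow s1 fun v hv => (Multiset.mem_filter.1 hv).2
    obtain ⟨D, hD, hs2p⟩ := prod_dvd_pow s2 fun v hv =>
      key v (Multiset.mem_filter.1 hv).1 (Multiset.mem_filter.1 hv).2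
    set r1 := Multiset.card s1 with hr1def
    set r2 := Multiset.card s2 with hr2def
    have hr12 : r1 + r2 ≤ lam := by
      have hc := congrArg Multiset.card hsplit
      rw [Multiset.card_add] at hc
      omega
    set j := r1 + N * r2 with hjdef
    have hjn : j + 1 ≤ n := by
      have h1 : N * r2 ≤ N * lam := Nat.mul_le_mul_left N (by omega)
      have h2 : n = N * lam + lam + 1 := by rw [hn]; ring
      omega
    have hcomb : q ^ j * (q ^ (n - j) * D) = q ^ j * (ε * η) := by
      calc q ^ j * (q ^ (n - j) * D) = q ^ n * D := by
            rw [← mul_assoc, ← pow_add, (by omega : j + (n - j) = n)]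
      _ = (ε * ((q ^ r1 * η) * s2.prod)) * D := by
            rw [hεs, ← hsplit, Multiset.prod_add, hs1p]
      _ = (ε * η * q ^ r1) * (s2.prod * D) := by ac_rfl
      _ = (ε * η * q ^ r1) * q ^ (N * r2) := by rw [← hs2p]
      _ = q ^ j * (ε * η) := by rw [hjdef, pow_add]; ac_rfl
    have hfin : q ^ (n - j) * D = ε * η := mul_left_cancel hcomb
    have h1 : q * (q ^ (n - j - 1) * D * (ε * η)⁻¹) = 1 := by
      have hq1 : q * q ^ (n - j - 1) = q ^ (n - j) := by
        rw [← pow_succ']; congr 1; omega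
      calc q * (q ^ (n - j - 1) * D * (ε * η)⁻¹)
          = (q * q ^ (n - j - 1)) * D * (ε * η)⁻¹ := by ac_rfl
      _ = (ε * η) * (ε * η)⁻¹ := by rw [hq1, hfin]
      _ = 1 := by group
    refine hqm.2 ?_
    rw [inv_eq_of_mul_eq_one_right h1]
    exact H.mul_mem (H.mul_mem (pow_mem hq_atom.1 _) hD) (hu_mul hεu hηu).2
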